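/- Suppose X is admissible with base point p, and φ : π₁(X,p) → lim← π₁(Xₙ,p₁) is the canonical homomorphism induced by the projections Rₙ : X → Xₙ. If the topological fundamental group π₁(X,p) is a T₁ space, then φ is injective. Equivalently: if π₁(X,p) is T₁ and f is a loop in X based at p such that for every n the projected loop Rₙ∘f is null-homotopic in Xₙ, then f is null-homotopic in X. -/

import Mathlib

open Set Topology unitInterval

noncomputable section

/-- The loop space `C_p(X)`: continuous maps `f : [0,1] → X` with `f 0 = f 1 = p`,
with the topology of uniform convergence (the compact-open topology on `C(I,X)`,
which agrees with uniform convergence for metric `X`). -/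
def LoopSp (X : Type) [TopologicalSpace X] (p : X) : Type :=
  {f : C(unitInterval, X) // f 0 = p ∧ f 1 = p}

instance (X : Type) [TopologicalSpace X] (p : X) : TopologicalSpace (LoopSp X p) :=
  inferInstanceAs (TopologicalSpace {f : C(unitInterval, X) // f 0 = p ∧ f 1 = p})

/-- The topological fundamental group `π₁(X,p)`: the set of path components of the
loop space `C_p(X)`, with the quotient topology. -/
def TopPi1 (X : Type) [TopologicalSpace X] (p : X) : Type :=
  @Quotient (LoopSp X p) (pathSetoid _)

instance (X : Type) [TopologicalSpace X] (p : X) : TopologicalSpace (TopPi1 X p) :=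
  inferInstanceAs (TopologicalSpace (@Quotient (LoopSp X p) (pathSetoid _)))

/-- The class in `π₁(X,p)` of a loop. -/
def TopPi1.mk {X : Type} [TopologicalSpace X] {p : X} (f : LoopSp X p) : TopPi1 X p :=
  @Quotient.mk _ (pathSetoid _) f

/-- A continuous map sending `p` to `q` induces a map on loops. -/
def LoopSp.map {X Y : Type} [TopologicalSpace X] [TopologicalSpace Y] {p : X} {q : Y}
    (f : C(X, Y)) (hf : f p = q) : LoopSp X p → LoopSp Y q :=
  fun α => ⟨f.comp α.1, by simp [α.2.1, α.2.2, hf]⟩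

lemma LoopSp.continuous_map {X Y : Type} [TopologicalSpace X] [TopologicalSpace Y]
    {p : X} {q : Y} (f : C(X, Y)) (hf : f p = q) :
    Continuous (LoopSp.map f hf) :=
  Continuous.subtype_mk ((ContinuousMap.continuous_postcomp f).comp continuous_subtype_val) _

/-- The homomorphism `f_* : π₁(X,p) → π₁(Y,q)` induced by a continuous map `f` with
`f p = q`, namely `f_*[α] = [f ∘ α]`. -/
def TopPi1.map {X Y : Type} [TopologicalSpace X] [TopologicalSpace Y] {p : X} {q : Y}
    (f : C(X, Y)) (hf : f p = q) : TopPi1 X p → TopPi1 Y q :=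
  @Quotient.map _ _ (pathSetoid _) (pathSetoid _) (LoopSp.map f hf)
    (fun _ _ h => ⟨h.somePath.map (LoopSp.continuous_map f hf)⟩)

/-- A space is totally path disconnected if each of its path components is a single point. -/
def IsTotallyPathDisconnected (Y : Type) [TopologicalSpace Y] : Prop :=
  ∀ x y : Y, Joined x y → x = y

/-- A continuous surjection is a (Hurewicz) fibration if it has the homotopy lifting
property with respect to all spaces. -/
def IsFibration {E B : Type} [TopologicalSpace E] [TopologicalSpace B] (q : E → B) : Prop :=
  Function.Surjective q ∧ Continuous q ∧
    ∀ (Y : Type) [TopologicalSpace Y] (f : Y → E) (F : Y × unitInterval → B),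
      Continuous f → Continuous F → (∀ y, F (y, 0) = q (f y)) →
      ∃ G : Y × unitInterval → E, Continuous G ∧ (∀ z, q (G z) = F z) ∧
        ∀ y, G (y, 0) = f y

end

noncomputable section AuxProof

open Filter

namespace Stmt5Aux

variable {X : Type} [TopologicalSpace X] {p : X}

/-- View a loop as a path. -/
def loopToPath (f : LoopSp X p) : Path p p :=
  { toContinuousMap := f.1
    source' := f.2.1
    target' := f.2.2 }

/-- View a path as a loop. -/
def pathToLoop (γ : Path p p) : LoopSp X p :=
  ⟨γ.toContinuousMap, γ.source, γ.target⟩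

@[simp] lemma loopToPath_pathToLoop (γ : Path p p) : loopToPath (pathToLoop γ) = γ := rfl

lemma continuous_topPi1_mk : Continuous (TopPi1.mk : LoopSp X p → TopPi1 X p) :=
  continuous_quotient_mk'

lemma TopPi1.mk_eq_mk_iff {f g : LoopSp X p} :
    TopPi1.mk f = TopPi1.mk g ↔ Joined f g :=
  ⟨fun h => @Quotient.exact _ (pathSetoid _) _ _ h, fun h => Quotient.sound h⟩

lemma TopPi1.map_mk {Y : Type} [TopologicalSpace Y] {q : Y}
    (F : C(X, Y)) (hF : F p = q) (f : LoopSp X p) :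
    TopPi1.map F hF (TopPi1.mk f) = TopPi1.mk (LoopSp.map F hF f) := rfl

lemma joined_map_loop {Y : Type} [TopologicalSpace Y] {q : Y} {f g : LoopSp X p}
    (h : Joined f g) (F : C(X, Y)) (hF : F p = q) :
    Joined (LoopSp.map F hF f) (LoopSp.map F hF g) :=
  ⟨h.somePath.map (LoopSp.continuous_map F hF)⟩

lemma joined_iff_homotopic (f g : LoopSp X p) :
    Joined f g ↔ (loopToPath f).Homotopic (loopToPath g) := by
  constructor
  · rintro ⟨γ⟩
    refine ⟨{ toFun := fun st => (γ st.1).1 st.2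
              continuous_toFun := ?_
              map_zero_left := ?_
              map_one_left := ?_
              prop' := ?_ }⟩
    · exact continuous_eval.comp
        (((continuous_subtype_val.comp γ.continuous).comp continuous_fst).prodMk continuous_snd)
    · intro x; exact congrArg (fun z : LoopSp X p => z.1 x) γ.source
    · intro x; exact congrArg (fun z : LoopSp X p => z.1 x) γ.target
    · intro t x hx
      simp only [Set.mem_insert_iff, Set.mem_singleton_iff] at hx
      rcases hx with rfl | rfl
      · exact ((γ t).2.1).trans f.2.1.symm
      · exact ((γ t).2.2).trans f.2.2.symm
  · rintro ⟨H⟩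
    have h0 : ∀ s : unitInterval, (H.toContinuousMap.curry s) 0 = p := fun s =>
      (H.prop' s 0 (by simp)).trans f.2.1
    have h1 : ∀ s : unitInterval, (H.toContinuousMap.curry s) 1 = p := fun s =>
      (H.prop' s 1 (by simp)).trans f.2.2
    exact ⟨{ toFun := fun s => ⟨H.toContinuousMap.curry s, h0 s, h1 s⟩
             continuous_toFun := (H.toContinuousMap.curry.continuous).subtype_mk _
             source' := Subtype.ext (ContinuousMap.ext fun t => H.map_zero_left t)
             target' := Subtype.ext (ContinuousMap.ext fun t => H.map_one_left t) }⟩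

lemma loopToPath_map_trans_symm {X Y : Type} [TopologicalSpace X] [TopologicalSpace Y]
    {p : X} {q : Y} (M : C(X, Y)) (hM : M p = q) (f g : LoopSp X p) :
    loopToPath (LoopSp.map M hM (pathToLoop ((loopToPath f).trans (loopToPath g).symm)))
      = (loopToPath (LoopSp.map M hM f)).trans (loopToPath (LoopSp.map M hM g)).symm := by
  ext t
  show M (((loopToPath f).trans (loopToPath g).symm) t) = _
  rw [Path.trans_apply, Path.trans_apply]
  split_ifs <;> rfl

lemma homotopic_cancel (F G : Path p p) (h : (F.trans G.symm).Homotopic (Path.refl p)) :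
    F.Homotopic G := by
  have h1 : F.Homotopic (F.trans (Path.refl p)) := ⟨(Path.Homotopy.transRefl F).symm⟩
  have h2 : (F.trans (Path.refl p)).Homotopic (F.trans (G.symm.trans G)) :=
    Path.Homotopic.hcomp (Path.Homotopic.refl F) ⟨Path.Homotopy.reflSymmTrans G⟩
  have h3 : (F.trans (G.symm.trans G)).Homotopic ((F.trans G.symm).trans G) :=
    ⟨(Path.Homotopy.transAssoc F G.symm G).symm⟩
  have h4 : ((F.trans G.symm).trans G).Homotopic ((Path.refl p).trans G) :=
    Path.Homotopic.hcomp h (Path.Homotopic.refl G)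
  have h5 : ((Path.refl p).trans G).Homotopic G := ⟨Path.Homotopy.reflTrans G⟩
  exact (((h1.trans h2).trans h3).trans h4).trans h5

end Stmt5Aux

namespace Stmt5Aux

variable {A : Type} [MetricSpace A] {Xs : ℕ → Set A}

def castX {a b : ℕ} (h : a = b) (x : ↥(Xs a)) : ↥(Xs b) := ⟨x.1, h ▸ x.2⟩

variable (r : ∀ n, C(↥(Xs (n + 1)), ↥(Xs n)))

def down : (n m : ℕ) → m ≤ n → ↥(Xs n) → ↥(Xs m)
  | 0, _, h, x => castX (Nat.le_zero.mp h).symm x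
  | n + 1, m, h, x =>
    if h' : m = n + 1 then castX h'.symm x
    else down n m (by omega) (r n x)

lemma down_self : ∀ (n : ℕ) (h : n ≤ n) (x : ↥(Xs n)), down r n n h x = x
  | 0, _, x => Subtype.ext rfl
  | n + 1, h, x => by
    simp only [down, dif_pos rfl]
    exact Subtype.ext rfl

lemma down_cont : ∀ (n m : ℕ) (h : m ≤ n), Continuous (down r n m h)
  | 0, m, h => by
    have : down r 0 m h = fun x => castX (Nat.le_zero.mp h).symm x := rfl
    rw [this]; exact continuous_subtype_val.subtype_mk _
  | n + 1, m, h => by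
    by_cases h' : m = n + 1
    · have : down r (n + 1) m h = fun x => castX h'.symm x := by
        funext x; simp [down, h']
      rw [this]; exact continuous_subtype_val.subtype_mk _
    · have : down r (n + 1) m h = fun x => down r n m (by omega) (r n x) := by
        funext x; simp [down, h']
      rw [this]; exact (down_cont n m (by omega)).comp (r n).continuous

lemma down_coh (x : ∀ m, ↥(Xs m)) (hx : ∀ m, r m (x (m + 1)) = x m) :
    ∀ (n m : ℕ) (h : m ≤ n), down r n m h (x n) = x m
  | 0, m, h => by
    obtain rfl : m = 0 := Nat.le_zero.mp h
    simp only [down]; exact Subtype.ext rfl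
  | n + 1, m, h => by
    by_cases h' : m = n + 1
    · subst h'; simp only [down, dif_pos rfl]; exact Subtype.ext rfl
    · simp only [down, dif_neg h']
      rw [hx n]
      exact down_coh x hx n m (by omega)

lemma down_p1 (hmono : Monotone Xs)
    (hr : ∀ n (x : ↥(Xs n)), r n (Set.inclusion (hmono (Nat.le_succ n)) x) = x) {p1 : A} :
    ∀ (n m : ℕ) (h : m ≤ n) (ha : p1 ∈ Xs n) (hb : p1 ∈ Xs m),
      down r n m h ⟨p1, ha⟩ = ⟨p1, hb⟩
  | 0, m, h, ha, hb => by
    obtain rfl : m = 0 := Nat.le_zero.mp h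
    simp only [down]; exact Subtype.ext rfl
  | n + 1, m, h, ha, hb => by
    by_cases h' : m = n + 1
    · subst h'; simp only [down, dif_pos rfl]; exact Subtype.ext rfl
    · have hn : p1 ∈ Xs n := hmono (by omega : m ≤ n) hb
      simp only [down, dif_neg h']
      have h3 : Set.inclusion (hmono (Nat.le_succ n)) (⟨p1, hn⟩ : ↥(Xs n)) = ⟨p1, ha⟩ :=
        Subtype.ext rfl
      have h2 := hr n ⟨p1, hn⟩
      rw [h3] at h2
      rw [h2]
      exact down_p1 hmono hr n m (by omega) hn hb

lemma down_step :
    ∀ (n m : ℕ) (h : m + 1 ≤ n) (h' : m ≤ n) (x : ↥(Xs n)),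
      r m (down r n (m + 1) h x) = down r n m h' x
  | 0, m, h, _, _ => absurd h (by omega)
  | n + 1, m, h, h', x => by
    by_cases hm : m + 1 = n + 1
    · obtain rfl : m = n := by omega
      rw [down_self]
      simp only [down, dif_neg (show m ≠ m + 1 by omega)]
      rw [down_self]
    · simp only [down, dif_neg hm, dif_neg (show m ≠ n + 1 by omega)]
      exact down_step n m (by omega) (by omega) (r n x)

def iotaF (hmono : Monotone Xs) (n : ℕ) (y : ↥(Xs n)) : ∀ m, ↥(Xs m) := fun m =>
  if h : m ≤ n then down r n m h y else Set.inclusion (hmono (by omega)) y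

lemma iotaF_coh (hmono : Monotone Xs)
    (hr : ∀ n (x : ↥(Xs n)), r n (Set.inclusion (hmono (Nat.le_succ n)) x) = x)
    (n : ℕ) (y : ↥(Xs n)) (m : ℕ) :
    r m (iotaF r hmono n y (m + 1)) = iotaF r hmono n y m := by
  by_cases h1 : m + 1 ≤ n
  · simp only [iotaF, dif_pos h1, dif_pos (show m ≤ n by omega)]
    exact down_step r n m h1 (by omega) y
  · by_cases h2 : m ≤ n
    · obtain rfl : m = n := by omega
      simp only [iotaF, dif_neg (show ¬m + 1 ≤ m by omega), dif_pos le_rfl]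
      rw [down_self]
      exact hr m y
    · simp only [iotaF, dif_neg h1, dif_neg h2]
      have h3 : Set.inclusion (hmono (by omega : n ≤ m + 1)) y =
          Set.inclusion (hmono (Nat.le_succ m)) (Set.inclusion (hmono (by omega : n ≤ m)) y) :=
        Subtype.ext rfl
      rw [h3, hr m]

lemma iotaF_cont (hmono : Monotone Xs) (n : ℕ) :
    Continuous (fun y => iotaF r hmono n y) := by
  refine continuous_pi fun m => ?_
  by_cases h : m ≤ n
  · have : (fun y => iotaF r hmono n y m) = fun y => down r n m h y := by
      funext y; simp [iotaF, h]
    rw [this]; exact down_cont r n m h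
  · have : (fun y => iotaF r hmono n y m) = fun y =>
        Set.inclusion (hmono (by omega : n ≤ m)) y := by
      funext y; simp [iotaF, h]
    rw [this]; exact continuous_inclusion _

lemma iotaF_p1 (hmono : Monotone Xs)
    (hr : ∀ n (x : ↥(Xs n)), r n (Set.inclusion (hmono (Nat.le_succ n)) x) = x)
    {p1 : A} (n : ℕ) (hn : p1 ∈ Xs n) (m : ℕ) (hm : p1 ∈ Xs m) :
    iotaF r hmono n ⟨p1, hn⟩ m = ⟨p1, hm⟩ := by
  by_cases h : m ≤ n
  · simp only [iotaF, dif_pos h]; exact down_p1 r hmono hr n m h hn hm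
  · simp only [iotaF, dif_neg h]

lemma iotaF_eq (hmono : Monotone Xs) (x : ∀ m, ↥(Xs m))
    (hx : ∀ m, r m (x (m + 1)) = x m) (n m : ℕ) (h : m ≤ n) :
    iotaF r hmono n (x n) m = x m := by
  simp only [iotaF, dif_pos h]; exact down_coh r x hx n m h

end Stmt5Aux

end AuxProof


/-- If `X` is admissible with base point `p` and `π₁(X,p)` is a T₁ space, then the
canonical homomorphism `φ : π₁(X,p) → lim← π₁(Xₙ,p₁)` is injective. Equivalently, if
`f` is a loop in `X` at `p` all of whose projections `Rₙ ∘ f` are null-homotopic in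
`Xₙ`, then `f` is null-homotopic in `X`. -/
theorem stmt5
    -- an ambient metric space containing the nested sequence
    (A : Type) [MetricSpace A]
    -- the nested sequence {p₁} ⊆ X₁ ⊆ X₂ ⊆ ⋯ of path-connected separable metric spaces
    (Xs : ℕ → Set A) (hmono : Monotone Xs)
    (p1 : A) (hp1 : p1 ∈ Xs 0)
    (hpc : ∀ n, IsPathConnected (Xs n))
    (hsep : ∀ n, TopologicalSpace.SeparableSpace (Xs n))
    -- the retractions rₙ : Xₙ₊₁ → Xₙ, restricting to the identity on Xₙ
    (r : ∀ n, C(↥(Xs (n + 1)), ↥(Xs n)))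
    (hr : ∀ n (x : ↥(Xs n)), r n (Set.inclusion (hmono (Nat.le_succ n)) x) = x)
    -- each π₁(Xₙ, p₁) is totally disconnected
    (htd : ∀ n, TotallyDisconnectedSpace (TopPi1 (↥(Xs n)) ⟨p1, hmono (Nat.zero_le n) hp1⟩))
    -- the inverse limit X = lim← Xₙ, as a subspace of the product ∏ₙ Xₙ
    (L : Set (∀ m, ↥(Xs m))) (hLdef : L = {x | ∀ m, r m (x (m + 1)) = x m})
    -- the base point p = (p₁, p₁, …)
    (p : ↥L) (hp : ∀ n, (p.1 n : A) = p1)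
    -- the canonical homomorphism φ([f]) = (R₁*([f]), R₂*([f]), …) induced by the
    -- projections Rₙ : X → Xₙ (injectivity into lim← π₁(Xₙ,p₁) is the same as
    -- injectivity into the product ∏ₙ π₁(Xₙ,p₁), which contains it)
    (φ : TopPi1 (↥L) p → ∀ n, TopPi1 (↥(Xs n)) ⟨p1, hmono (Nat.zero_le n) hp1⟩)
    (hφ : ∀ γ n, φ γ n =
      TopPi1.map ⟨fun x : ↥L => x.1 n, ((continuous_apply n).comp continuous_subtype_val)⟩
        (Subtype.ext (hp n)) γ)
    (ht1 : T1Space (TopPi1 (↥L) p)) :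
    Function.Injective φ ∧
      ∀ f : LoopSp (↥L) p,
        (∀ n, φ (TopPi1.mk f) n =
          TopPi1.mk (⟨ContinuousMap.const _ ⟨p1, hmono (Nat.zero_le n) hp1⟩, rfl, rfl⟩ :
            LoopSp (↥(Xs n)) ⟨p1, hmono (Nat.zero_le n) hp1⟩)) →
        TopPi1.mk f = TopPi1.mk (⟨ContinuousMap.const _ p, rfl, rfl⟩ : LoopSp (↥L) p) := by
  haveI := ht1
  -- coherence of points of the inverse limit
  have hcoh : ∀ x : ↥L, ∀ m, r m (x.1 (m + 1)) = x.1 m := by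
    intro x m
    have hx : x.1 ∈ {y : ∀ k, ↥(Xs k) | ∀ k, r k (y (k + 1)) = y k} := by
      rw [← hLdef]; exact x.2
    exact hx m
  -- the sections ι_n : X_n → L of the projections
  have hmemL : ∀ (n : ℕ) (y : ↥(Xs n)), Stmt5Aux.iotaF r hmono n y ∈ L := by
    intro n y
    rw [hLdef]
    exact fun m => Stmt5Aux.iotaF_coh r hmono hr n y m
  let iot : ∀ n : ℕ, C(↥(Xs n), ↥L) := fun n =>
    ⟨fun y => ⟨Stmt5Aux.iotaF r hmono n y, hmemL n y⟩,
      (Stmt5Aux.iotaF_cont r hmono n).subtype_mk _⟩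
  have hiotbp : ∀ n : ℕ, iot n ⟨p1, hmono (Nat.zero_le n) hp1⟩ = p := by
    intro n
    apply Subtype.ext
    funext m
    show Stmt5Aux.iotaF r hmono n ⟨p1, hmono (Nat.zero_le n) hp1⟩ m = p.1 m
    rw [Stmt5Aux.iotaF_p1 r hmono hr n (hmono (Nat.zero_le n) hp1) m (hmono (Nat.zero_le m) hp1)]
    exact Subtype.ext (hp m).symm
  -- the key statement: a loop all of whose projections are null-homotopic is null-homotopic
  have key : ∀ c : LoopSp (↥L) p,
      (∀ n, Joined (X := LoopSp (↥(Xs n)) ⟨p1, hmono (Nat.zero_le n) hp1⟩)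
        (LoopSp.map (q := ⟨p1, hmono (Nat.zero_le n) hp1⟩)
          (⟨fun x : ↥L => x.1 n, ((continuous_apply n).comp continuous_subtype_val)⟩ :
            C(↥L, ↥(Xs n)))
          (Subtype.ext (hp n)) c)
        (⟨ContinuousMap.const _ ⟨p1, hmono (Nat.zero_le n) hp1⟩, rfl, rfl⟩ :
          LoopSp (↥(Xs n)) ⟨p1, hmono (Nat.zero_le n) hp1⟩)) →
      Joined c (⟨ContinuousMap.const _ p, rfl, rfl⟩ : LoopSp (↥L) p) := by
    intro c hc
    -- the approximating loops h n = ι_n ∘ R_n ∘ c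
    have hcomp_p : ∀ n : ℕ,
        ((iot n).comp
          (⟨fun x : ↥L => x.1 n, ((continuous_apply n).comp continuous_subtype_val)⟩ :
            C(↥L, ↥(Xs n)))) p = p := by
      intro n
      show iot n (p.1 n) = p
      have e : (p.1 n) = (⟨p1, hmono (Nat.zero_le n) hp1⟩ : ↥(Xs n)) := Subtype.ext (hp n)
      rw [e]
      exact hiotbp n
    let h : ℕ → LoopSp (↥L) p := fun n =>
      LoopSp.map
        ((iot n).comp
          (⟨fun x : ↥L => x.1 n, ((continuous_apply n).comp continuous_subtype_val)⟩ :
            C(↥L, ↥(Xs n))))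
        (hcomp_p n) c
    -- each h n is null-homotopic
    have hjoin : ∀ n, TopPi1.mk (h n)
        = TopPi1.mk (⟨ContinuousMap.const _ p, rfl, rfl⟩ : LoopSp (↥L) p) := by
      intro n
      apply Quotient.sound
      have hj := Stmt5Aux.joined_map_loop (hc n) (iot n) (hiotbp n)
      obtain ⟨γ⟩ := hj
      have e1 : h n = LoopSp.map (iot n) (hiotbp n)
          (LoopSp.map (q := ⟨p1, hmono (Nat.zero_le n) hp1⟩)
            (⟨fun x : ↥L => x.1 n, ((continuous_apply n).comp continuous_subtype_val)⟩ :
              C(↥L, ↥(Xs n)))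
            (Subtype.ext (hp n)) c) :=
        Subtype.ext (ContinuousMap.ext fun t => rfl)
      have e2 : (⟨ContinuousMap.const _ p, rfl, rfl⟩ : LoopSp (↥L) p)
          = LoopSp.map (iot n) (hiotbp n)
            (⟨ContinuousMap.const _ ⟨p1, hmono (Nat.zero_le n) hp1⟩, rfl, rfl⟩ :
              LoopSp (↥(Xs n)) ⟨p1, hmono (Nat.zero_le n) hp1⟩) :=
        Subtype.ext (ContinuousMap.ext fun t => (hiotbp n).symm)
      exact ⟨γ.cast e1 e2⟩
    -- the approximating loops converge to c
    have htend : Filter.Tendsto h Filter.atTop (𝓝 c) := by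
      apply tendsto_subtype_rng.mpr
      rw [ContinuousMap.tendsto_iff_tendstoUniformly]
      rw [tendstoUniformly_iff_tendsto]
      rw [uniformity_subtype, Filter.tendsto_comap_iff]
      rw [Pi.uniformity, Filter.tendsto_iInf]
      intro m
      rw [Filter.tendsto_comap_iff]
      have hdiag : Filter.Tendsto
          (fun q : ℕ × unitInterval => ((c.1 q.2).1 m, (c.1 q.2).1 m))
          (Filter.atTop ×ˢ ⊤) (uniformity ↥(Xs m)) :=
        Filter.tendsto_def.mpr fun s hs => Filter.univ_mem' fun q => refl_mem_uniformity hs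
      refine Filter.Tendsto.congr' ?_ hdiag
      have h1 : ∀ᶠ q : ℕ × unitInterval in Filter.atTop ×ˢ ⊤, m ≤ q.1 :=
        (Filter.eventually_atTop.mpr ⟨m, fun n hn => hn⟩).prod_inl ⊤
      filter_upwards [h1] with q hq
      have e := Stmt5Aux.iotaF_eq r hmono (c.1 q.2).1 (hcoh (c.1 q.2)) q.1 m hq
      exact Prod.ext rfl e.symm
    -- conclude using T₁
    have hq := ((Stmt5Aux.continuous_topPi1_mk).tendsto c).comp htend
    have hconst : Filter.Tendsto
        (fun _ : ℕ => TopPi1.mk (⟨ContinuousMap.const _ p, rfl, rfl⟩ : LoopSp (↥L) p))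
        Filter.atTop (𝓝 (TopPi1.mk c)) := hq.congr hjoin
    have hmkeq := tendsto_const_nhds_iff.mp hconst
    exact (Stmt5Aux.TopPi1.mk_eq_mk_iff.mp hmkeq).symm
  constructor
  · -- injectivity
    intro a b
    refine @Quotient.inductionOn₂ _ _ (pathSetoid _) (pathSetoid _)
      (fun x y => φ x = φ y → x = y) a b fun f g hab => ?_
    have hn : ∀ n, Joined
        (LoopSp.map (q := ⟨p1, hmono (Nat.zero_le n) hp1⟩)
          (⟨fun x : ↥L => x.1 n, ((continuous_apply n).comp continuous_subtype_val)⟩ :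
            C(↥L, ↥(Xs n)))
          (Subtype.ext (hp n)) f)
        (LoopSp.map (q := ⟨p1, hmono (Nat.zero_le n) hp1⟩)
          (⟨fun x : ↥L => x.1 n, ((continuous_apply n).comp continuous_subtype_val)⟩ :
            C(↥L, ↥(Xs n)))
          (Subtype.ext (hp n)) g) := by
      intro n
      have h1 : φ (TopPi1.mk f) n = φ (TopPi1.mk g) n := congrFun hab n
      rw [hφ, hφ] at h1
      have h2 : TopPi1.mk (LoopSp.map
            (⟨fun x : ↥L => x.1 n, ((continuous_apply n).comp continuous_subtype_val)⟩ :
              C(↥L, ↥(Xs n)))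
            (Subtype.ext (hp n)) f)
          = TopPi1.mk (LoopSp.map
            (⟨fun x : ↥L => x.1 n, ((continuous_apply n).comp continuous_subtype_val)⟩ :
              C(↥L, ↥(Xs n)))
            (Subtype.ext (hp n)) g) := h1
      exact Stmt5Aux.TopPi1.mk_eq_mk_iff.mp h2
    have hcn : ∀ n, Joined (X := LoopSp (↥(Xs n)) ⟨p1, hmono (Nat.zero_le n) hp1⟩)
        (LoopSp.map (q := ⟨p1, hmono (Nat.zero_le n) hp1⟩)
          (⟨fun x : ↥L => x.1 n, ((continuous_apply n).comp continuous_subtype_val)⟩ :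
            C(↥L, ↥(Xs n)))
          (Subtype.ext (hp n))
          (Stmt5Aux.pathToLoop
            ((Stmt5Aux.loopToPath f).trans (Stmt5Aux.loopToPath g).symm)))
        (⟨ContinuousMap.const _ ⟨p1, hmono (Nat.zero_le n) hp1⟩, rfl, rfl⟩ :
          LoopSp (↥(Xs n)) ⟨p1, hmono (Nat.zero_le n) hp1⟩) := by
      intro n
      refine (Stmt5Aux.joined_iff_homotopic _ _).mpr ?_
      rw [Stmt5Aux.loopToPath_map_trans_symm]
      have hFG := (Stmt5Aux.joined_iff_homotopic _ _).mp (hn n)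
      have h2 := Path.Homotopic.hcomp hFG
        (Path.Homotopic.refl
          (Stmt5Aux.loopToPath (LoopSp.map
            (⟨fun x : ↥L => x.1 n, ((continuous_apply n).comp continuous_subtype_val)⟩ :
              C(↥L, ↥(Xs n)))
            (Subtype.ext (hp n)) g)).symm)
      have h3 : ((Stmt5Aux.loopToPath (LoopSp.map
            (⟨fun x : ↥L => x.1 n, ((continuous_apply n).comp continuous_subtype_val)⟩ :
              C(↥L, ↥(Xs n)))
            (Subtype.ext (hp n)) g)).trans
          (Stmt5Aux.loopToPath (LoopSp.map
            (⟨fun x : ↥L => x.1 n, ((continuous_apply n).comp continuous_subtype_val)⟩ :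
              C(↥L, ↥(Xs n)))
            (Subtype.ext (hp n)) g)).symm).Homotopic
          (Path.refl ⟨p1, hmono (Nat.zero_le n) hp1⟩) :=
        ⟨(Path.Homotopy.reflTransSymm _).symm⟩
      exact h2.trans h3
    have hjc := key _ hcn
    have h5 := (Stmt5Aux.joined_iff_homotopic _ _).mp hjc
    rw [Stmt5Aux.loopToPath_pathToLoop] at h5
    have h6 : ((Stmt5Aux.loopToPath f).trans
        (Stmt5Aux.loopToPath g).symm).Homotopic (Path.refl p) := h5
    have h7 := Stmt5Aux.homotopic_cancel _ _ h6
    exact Quotient.sound ((Stmt5Aux.joined_iff_homotopic f g).mpr h7)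
  · -- loops with null-homotopic projections are null-homotopic
    intro f hf
    apply Quotient.sound
    refine key f fun n => ?_
    have h1 := hf n
    rw [hφ] at h1
    exact Stmt5Aux.TopPi1.mk_eq_mk_iff.mp h1
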